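/- arXiv:1108.3830 — 2 statements merged into one kernel-verified Lean document; each statement's English description precedes it below -/
import Mathlib

section
/- A positive composite integer n is a Carmichael number (i.e., b^(n-1) ≡ 1 (mod n) for every b coprime to n) if and only if n is squarefree and for every prime p dividing n, p - 1 divides n - 1. (Assume n is odd and composite with at least two prime divisors.) -/
/-- A Carmichael number: a composite integer `n` such that `b^(n-1) ≡ 1 (mod n)`
for every `b` coprime to `n`. -/
def IsCarmichael (n : ℕ) : Prop :=
  1 < n ∧ ¬ n.Prime ∧ ∀ b : ℕ, Nat.Coprime b n → b ^ (n - 1) ≡ 1 [MOD n]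

private lemma pow_one_add_of_sq_eq_zero {R : Type*} [CommRing R] (x : R) (hx : x * x = 0)
    (N : ℕ) : (1 + x) ^ N = 1 + (N : R) * x := by
  induction N with
  | zero => simp
  | succ k ih =>
    have h : (1 + (k : R) * x) * (1 + x) = 1 + ((k : R) + 1) * x + (k : R) * (x * x) := by ring
    rw [pow_succ, ih, h, hx, mul_zero, add_zero]
    push_cast
    ring

private lemma coprime_of_modEq {a c m : ℕ} (h : a ≡ c [MOD m]) (hc : c.Coprime m) :
    a.Coprime m := by
  unfold Nat.Coprime at *
  rw [h.gcd_eq, hc]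

/-- Lifting a residue coprime to `p` to an integer coprime to all of `n`. -/
private lemma exists_coprime_modEq (n p : ℕ) (hp : p.Prime) (hn : n ≠ 0)
    (a : ℕ) (ha : a.Coprime p) :
    ∃ b : ℕ, b.Coprime n ∧ b ≡ a [MOD p ^ n.factorization p] := by
  set k := n.factorization p with hk
  set m := n / p ^ k with hm
  have hco : (p ^ k).Coprime m := (Nat.coprime_ordCompl hp hn).pow_left _
  obtain ⟨b, hb1, hb2⟩ := Nat.chineseRemainder hco a 1
  refine ⟨b, ?_, hb1⟩
  have hnm : p ^ k * m = n := Nat.ordProj_mul_ordCompl_eq_self n p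
  rw [← hnm]
  exact Nat.Coprime.mul_right (coprime_of_modEq hb1 (ha.pow_right _))
    (coprime_of_modEq hb2 (Nat.coprime_one_left m))

/-- **Korselt's Criterion.** An odd composite `n` with at least two distinct prime
factors is a Carmichael number iff it is squarefree and `p - 1 ∣ n - 1` for every
prime `p ∣ n`. -/
theorem korselt_criterion (n : ℕ) (hodd : Odd n) (h1 : 1 < n) (hcomp : ¬ n.Prime)
    (htwo : 2 ≤ n.primeFactors.card) :
    IsCarmichael n ↔ Squarefree n ∧ ∀ p : ℕ, p.Prime → p ∣ n → (p - 1) ∣ (n - 1) := by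
  have hn0 : n ≠ 0 := by omega
  constructor
  · rintro ⟨-, -, hcar⟩
    constructor
    · -- squarefree
      rw [Nat.squarefree_iff_prime_squarefree]
      intro p hp hpp
      have hpn : p ∣ n := dvd_trans (dvd_mul_right p p) hpp
      have hp2 : p ^ 2 ∣ n := by rwa [pow_two]
      have hk2 : 2 ≤ n.factorization p :=
        (hp.pow_dvd_iff_le_factorization hn0).mp hp2
      have ha : (1 + p).Coprime p := Nat.coprime_add_self_left.mpr (Nat.coprime_one_left p)
      obtain ⟨b, hbn, hbmod⟩ := exists_coprime_modEq n p hp hn0 (1 + p) ha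
      have hsqdvd : p ^ 2 ∣ p ^ n.factorization p := pow_dvd_pow p hk2
      have hb2 : b ≡ 1 + p [MOD p ^ 2] := hbmod.of_dvd hsqdvd
      have hcong : (1 + p) ^ (n - 1) ≡ 1 [MOD p ^ 2] :=
        ((hb2.symm.pow (n - 1)).trans ((hcar b hbn).of_dvd hp2))
      -- cast to ZMod (p^2)
      have hx : (p : ZMod (p ^ 2)) * p = 0 := by
        rw [← Nat.cast_mul, ← pow_two, ZMod.natCast_self]
      have hz : ((1 + p : ℕ) : ZMod (p ^ 2)) ^ (n - 1) = ((1 : ℕ) : ZMod (p ^ 2)) := by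
        rw [← Nat.cast_pow, ZMod.natCast_eq_natCast_iff]
        exact hcong
      rw [Nat.cast_add, Nat.cast_one,
        pow_one_add_of_sq_eq_zero (p : ZMod (p ^ 2)) hx (n - 1)] at hz
      have hz0 : (((n - 1) * p : ℕ) : ZMod (p ^ 2)) = 0 := by
        push_cast
        linear_combination hz
      have hdvd : p ^ 2 ∣ (n - 1) * p := (ZMod.natCast_eq_zero_iff _ _).mp hz0
      rw [pow_two] at hdvd
      have hpn1 : p ∣ n - 1 := (Nat.mul_dvd_mul_iff_right hp.pos).mp hdvd
      have : p ∣ 1 := by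
        have := Nat.dvd_sub hpn hpn1
        rwa [Nat.sub_sub_self (le_of_lt h1)] at this
      exact hp.one_lt.ne' (Nat.dvd_one.mp this)
    · -- p - 1 ∣ n - 1
      intro p hp hpn
      haveI : Fact p.Prime := ⟨hp⟩
      obtain ⟨g, hg⟩ := IsCyclic.exists_generator (α := (ZMod p)ˣ)
      have horder : orderOf g = p - 1 := by
        rw [orderOf_eq_card_of_forall_mem_zpowers hg, Nat.card_eq_fintype_card,
          ZMod.card_units_eq_totient, Nat.totient_prime hp]
      set a : ℕ := ((g : ZMod p)).val with hadef
      have ha : a.Coprime p := ZMod.val_coe_unit_coprime g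
      obtain ⟨b, hbn, hbmod⟩ := exists_coprime_modEq n p hp hn0 a ha
      have hk1 : 1 ≤ n.factorization p := hp.factorization_pos_of_dvd hn0 hpn
      have hpdvd : p ∣ p ^ n.factorization p := by
        conv_lhs => rw [← pow_one p]
        exact pow_dvd_pow p hk1
      have hbp : b ≡ a [MOD p] := hbmod.of_dvd hpdvd
      have hcong : a ^ (n - 1) ≡ 1 [MOD p] :=
        (hbp.symm.pow (n - 1)).trans ((hcar b hbn).of_dvd hpn)
      have hz : ((a : ZMod p)) ^ (n - 1) = 1 := by
        have := (ZMod.natCast_eq_natCast_iff _ _ _).mpr hcong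
        rwa [Nat.cast_pow, Nat.cast_one] at this
      have hga : (a : ZMod p) = (g : ZMod p) := by
        rw [hadef, ZMod.natCast_val, ZMod.cast_id]
      rw [hga] at hz
      have hgpow : g ^ (n - 1) = 1 := by
        rw [← Units.val_eq_one, Units.val_pow_eq_pow_val]
        exact hz
      rw [← horder]
      exact orderOf_dvd_of_pow_eq_one hgpow
  · rintro ⟨hsq, hdvd⟩
    refine ⟨h1, hcomp, fun b hb => ?_⟩
    have hb0 : b ≠ 0 := by
      rintro rfl
      simp only [Nat.coprime_zero_left] at hb
      omega
    have hble : 1 ≤ b ^ (n - 1) := Nat.one_le_iff_ne_zero.mpr (pow_ne_zero _ hb0)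
    have key : ∀ p ∈ n.primeFactors, p ∣ b ^ (n - 1) - 1 := by
      intro p hpmem
      have hp := Nat.prime_of_mem_primeFactors hpmem
      have hpn := Nat.dvd_of_mem_primeFactors hpmem
      have hbp : b.Coprime p := Nat.Coprime.coprime_dvd_right hpn hb
      have hferm : b ^ (p - 1) ≡ 1 [MOD p] := by
        have := Nat.ModEq.pow_totient hbp
        rwa [Nat.totient_prime hp] at this
      obtain ⟨c, hc⟩ := hdvd p hp hpn
      have : b ^ (n - 1) ≡ 1 [MOD p] := by
        rw [hc, pow_mul]
        calc (b ^ (p - 1)) ^ c ≡ 1 ^ c [MOD p] := hferm.pow c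
          _ = 1 := one_pow c
      exact (Nat.modEq_iff_dvd' hble).mp this.symm
    have hprod := Finset.prod_primes_dvd (b ^ (n - 1) - 1)
      (fun p hpmem => (Nat.prime_of_mem_primeFactors hpmem).prime) key
    rw [Nat.prod_primeFactors_of_squarefree hsq] at hprod
    exact ((Nat.modEq_iff_dvd' hble).mpr hprod).symm
end

section
/- For all real q ≥ 13, the quantity ((√(4q^(3/2) - 3q + 8) - √q)/(√q + 1))^2 is greater than √q. -/
/-- For all real `q ≥ 13`, the quantity
`((√(4q^{3/2} - 3q + 8) - √q)/(√q + 1))^2` exceeds `√q`. -/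
theorem korselt_calculus_bound (q : ℝ) (hq : 13 ≤ q) :
    Real.sqrt q <
      ((Real.sqrt (4 * q * Real.sqrt q - 3 * q + 8) - Real.sqrt q) /
        (Real.sqrt q + 1)) ^ 2 := by
  have hq0 : (0:ℝ) ≤ q := by linarith
  set s := Real.sqrt q with hs
  have hs0 : 0 ≤ s := Real.sqrt_nonneg q
  have hs2 : s ^ 2 = q := Real.sq_sqrt hq0
  have hsge : (3.6:ℝ) ≤ s := by nlinarith [hs2, hs0]
  set t := Real.sqrt s with ht
  have ht0 : 0 ≤ t := Real.sqrt_nonneg s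
  have ht2 : t ^ 2 = s := Real.sq_sqrt hs0
  have htge : (1.897:ℝ) ≤ t := by nlinarith [ht2, ht0]
  have key : t ^ 3 + t ^ 2 + t < Real.sqrt (4 * q * s - 3 * q + 8) := by
    rw [show t ^ 3 + t ^ 2 + t = |t ^ 3 + t ^ 2 + t| by
      rw [abs_of_nonneg]; positivity]
    apply lt_of_pow_lt_pow_left₀ 2 (Real.sqrt_nonneg _)
    rw [sq_abs, Real.sq_sqrt (by nlinarith : (0:ℝ) ≤ 4 * q * s - 3 * q + 8)]
    have hqts : q = t ^ 4 := by nlinarith [hs2, ht2]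
    rw [hqts, ← ht2]
    nlinarith [htge, sq_nonneg t, sq_nonneg (t - 2), sq_nonneg (t^2 - 2*t)]
  have hden : (0:ℝ) < s + 1 := by linarith
  have hdiv : t < (Real.sqrt (4 * q * s - 3 * q + 8) - s) / (s + 1) := by
    rw [lt_div_iff₀ hden]
    nlinarith [key, ht2]
  calc s = t ^ 2 := ht2.symm
    _ < ((Real.sqrt (4 * q * s - 3 * q + 8) - s) / (s + 1)) ^ 2 :=
      pow_lt_pow_left₀ hdiv ht0 (by norm_num)
end
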